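/- Under the hypotheses of the previous setting (f majorant, h(t) = β + λt + f(t) with smallest zero t* ∈ (0,R)), the Newton-type iteration map n(t) = t - h(t)/f'(t) satisfies β ≤ n(t) < t* for every t ∈ [0, t*). -/

import Mathlib

open Set

/-- The Newton-type iteration map `n(t) = t - h(t)/f'(t)` satisfies `β ≤ n(t) < t*`
on `[0,t*)`. -/
theorem iteration_map_bounds (R β lam : ℝ) (hR : 0 < R) (hβ : 0 < β) (hlam : 0 ≤ lam)
    (f f' : ℝ → ℝ)
    (hder : ∀ t ∈ Ico (0:ℝ) R, HasDerivWithinAt f (f' t) (Ico (0:ℝ) R) t)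
    (hf0 : f 0 = 0) (hf'0 : f' 0 = -1)
    (hconv : ConvexOn ℝ (Ico (0:ℝ) R) f')
    (hmono : StrictMonoOn f' (Ico (0:ℝ) R))
    (h : ℝ → ℝ) (hh : h = fun t => β + lam * t + f t)
    (tstar : ℝ) (htstar : tstar ∈ Ioo (0:ℝ) R) (hz : h tstar = 0)
    (hmin : ∀ t ∈ Ioo (0:ℝ) R, h t = 0 → tstar ≤ t)
    (hneg : ∀ t ∈ Ico (0:ℝ) tstar, f' t < 0) :
    ∀ t ∈ Ico (0:ℝ) tstar, β ≤ t - h t / f' t ∧ t - h t / f' t < tstar := by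
  obtain ⟨hts0, htsR⟩ := htstar
  -- derivative at interior points
  have hfR : ∀ c ∈ Ioo (0:ℝ) R, HasDerivAt f (f' c) c := by
    intro c hc
    exact (hder c ⟨hc.1.le, hc.2⟩).hasDerivAt (Ico_mem_nhds hc.1 hc.2)
  have hcont : ContinuousOn f (Ico (0:ℝ) R) := fun t ht =>
    (hder t ht).continuousWithinAt
  have hcontH : ContinuousOn h (Ico (0:ℝ) R) := by
    rw [hh]
    exact (continuousOn_const.add (continuousOn_const.mul continuousOn_id)).add hcont
  have hhR : ∀ c ∈ Ioo (0:ℝ) R, HasDerivAt h (lam + f' c) c := by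
    intro c hc
    rw [hh]
    have := ((hasDerivAt_id c).const_mul lam).add (hfR c hc)
    have h2 := (hasDerivAt_const c β).add this
    have e : (fun t => β + lam * t + f t) = (fun x => β) + ((fun y => lam * id y) + f) := by
      funext x; simp [add_assoc]
    rw [e]; exact h2.congr_deriv (by ring)
  have h0 : h 0 = β := by simp [hh, hf0]
  -- f' ≥ -1 on [0, R)
  have hge : ∀ t ∈ Ico (0:ℝ) R, -1 ≤ f' t := by
    intro t ht
    rcases eq_or_lt_of_le ht.1 with h0t | h0t
    · rw [← h0t, hf'0]
    · have := hmono ⟨le_refl 0, hR⟩ ht h0t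
      rw [hf'0] at this; linarith
  -- f t ≥ -t on [0, R)
  have hf_lb : ∀ t ∈ Ico (0:ℝ) R, -t ≤ f t := by
    intro t ht
    rcases eq_or_lt_of_le ht.1 with h0t | h0t
    · simp [← h0t, hf0]
    · obtain ⟨c, hc, hceq⟩ := exists_hasDerivAt_eq_slope f f' h0t
        (hcont.mono (Icc_subset_Ico_right ht.2))
        (fun x hx => hfR x ⟨hx.1, hx.2.trans ht.2⟩)
      have hcmem : c ∈ Ico (0:ℝ) R := ⟨hc.1.le, hc.2.trans ht.2⟩
      have h1 : -1 ≤ f' c := hge c hcmem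
      rw [hceq, hf0, sub_zero, sub_zero, le_div_iff₀ h0t] at h1
      linarith
  -- h > 0 on [0, tstar)
  have hpos : ∀ t ∈ Ico (0:ℝ) tstar, 0 < h t := by
    intro t ht
    rcases eq_or_lt_of_le ht.1 with h0t | h0t
    · rw [← h0t, h0]; exact hβ
    · by_contra hle
      push_neg at hle
      have hsub : Icc (0:ℝ) t ⊆ Ico (0:ℝ) R :=
        Icc_subset_Ico_right (ht.2.trans htsR)
      have hiv := intermediate_value_Icc' ht.1 (hcontH.mono hsub)
      have : (0:ℝ) ∈ Icc (h t) (h 0) := ⟨hle, by rw [h0]; exact hβ.le⟩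
      obtain ⟨s, hs, hs0⟩ := hiv this
      have hsne : s ≠ 0 := by
        intro hs'
        rw [hs', h0] at hs0; linarith
      have : tstar ≤ s := hmin s ⟨lt_of_le_of_ne hs.1 (Ne.symm hsne),
        lt_of_le_of_lt hs.2 (ht.2.trans htsR)⟩ hs0
      linarith [hs.2, ht.2]
  -- main proof
  intro t ht
  obtain ⟨ht0, htlt⟩ := ht
  have htR : t < R := htlt.trans htsR
  have hf't : f' t < 0 := hneg t ⟨ht0, htlt⟩
  have hht : 0 < h t := hpos t ⟨ht0, htlt⟩
  constructor
  · -- lower bound: β ≤ t - h t / f' t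
    have key : (t - β) * f' t ≤ h t := by
      rcases le_or_gt β t with hbt | hbt
      · have : (t - β) * f' t ≤ 0 :=
          mul_nonpos_of_nonneg_of_nonpos (by linarith) hf't.le
        linarith
      · have h1 : -1 ≤ f' t := hge t ⟨ht0, htR⟩
        have h2 : -t ≤ f t := hf_lb t ⟨ht0, htR⟩
        have h3 : (0:ℝ) ≤ (β - t) * (f' t + 1) :=
          mul_nonneg (by linarith) (by linarith)
        have h4 : (0:ℝ) ≤ lam * t := mul_nonneg hlam ht0
        simp only [hh]
        nlinarith
    have : h t / f' t ≤ t - β := by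
      rw [div_le_iff_of_neg hf't]
      linarith [key]
    linarith
  · -- upper bound: t - h t / f' t < tstar
    obtain ⟨c, hc, hceq⟩ := exists_hasDerivAt_eq_slope h (fun s => lam + f' s) htlt
      (hcontH.mono (fun x hx => ⟨ht0.trans hx.1, lt_of_le_of_lt hx.2 htsR⟩))
      (fun x hx => hhR x ⟨ht0.trans_lt hx.1, hx.2.trans htsR⟩)
    have hcmem : c ∈ Ico (0:ℝ) R := ⟨ht0.trans hc.1.le, hc.2.trans htsR⟩
    have hfc : f' t < f' c := hmono ⟨ht0, htR⟩ hcmem hc.1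
    have hts : (0:ℝ) < tstar - t := by linarith
    -- (lam + f' c) * (tstar - t) = h tstar - h t = -h t
    have heq : (lam + f' c) * (tstar - t) = -h t := by
      have := hceq
      rw [hz] at this
      field_simp at this
      linarith [this]
    have key : h t < (t - tstar) * f' t := by
      have h5 : f' t * (tstar - t) < (lam + f' c) * (tstar - t) := by
        apply mul_lt_mul_of_pos_right _ hts
        linarith
      nlinarith [heq, h5]
    have : t - tstar < h t / f' t := by
      rw [lt_div_iff_of_neg hf't]
      linarith
    linarith
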